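/- For every feasible solution U of M-CLP with slack x and every feasible solution P of M-CLP* with slack q, the duality gap satisfies the identity z*(P) − z(U) = Σ_{k=1}^K ∫_{[0,T]} x_k(T−s) dP_k(s) + Σ_{j=1}^J ∫_{[0,T]} q_j(T−t) dU_j(t). -/

import Mathlib

open MeasureTheory Filter

/-- A feasible solution of M-CLP. -/
def PrimalFeasible {K J : ℕ} (A : Matrix (Fin K) (Fin J) ℝ) (b β lam : Fin K → ℝ) (T : ℝ)
    (U : ℝ → Fin J → ℝ) : Prop :=
  (∀ j, MonotoneOn (fun t => U t j) (Set.Icc 0 T)) ∧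
  (∀ j, ∀ t ∈ Set.Ico (0:ℝ) T,
    Tendsto (fun s => U s j) (nhdsWithin t (Set.Ioi t)) (nhds (U t j))) ∧
  (∀ j, 0 ≤ U 0 j) ∧
  (∀ t ∈ Set.Ico (0:ℝ) T, ∀ k, A.mulVec (U t) k ≤ β k + t * b k) ∧
  (∀ k, A.mulVec (U T) k ≤ β k + T * b k + lam k)

/-- A feasible solution of M-CLP*. -/
def DualFeasible {K J : ℕ} (A : Matrix (Fin K) (Fin J) ℝ) (c γ μ : Fin J → ℝ) (T : ℝ)
    (P : ℝ → Fin K → ℝ) : Prop :=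
  (∀ k, MonotoneOn (fun s => P s k) (Set.Icc 0 T)) ∧
  (∀ k, ∀ s ∈ Set.Ico (0:ℝ) T,
    Tendsto (fun r => P r k) (nhdsWithin s (Set.Ioi s)) (nhds (P s k))) ∧
  (∀ k, 0 ≤ P 0 k) ∧
  (∀ s ∈ Set.Ico (0:ℝ) T, ∀ j, γ j + s * c j ≤ A.transpose.mulVec (P s) j) ∧
  (∀ j, γ j + T * c j + μ j ≤ A.transpose.mulVec (P T) j)

/-- `ν i` is the Lebesgue–Stieltjes measure on `[0,T]` of the (right-continuous,
nondecreasing) function `F · i`, with the convention `F (0-) i = 0`. -/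
def LSFamily {I : Type*} (T : ℝ) (F : ℝ → I → ℝ) (ν : I → Measure ℝ) : Prop :=
  ∀ i, ν i (Set.Icc 0 T)ᶜ = 0 ∧
    ∀ x ∈ Set.Icc (0:ℝ) T, ν i (Set.Icc 0 x) = ENNReal.ofReal (F x i)

/-- The M-CLP objective. -/
noncomputable def zPrimal {J : ℕ} (c γ μ : Fin J → ℝ) (T : ℝ) (U : ℝ → Fin J → ℝ)
    (ν : Fin J → Measure ℝ) : ℝ :=
  (∑ j, μ j * U 0 j) + ∑ j, ∫ t in Set.Icc (0:ℝ) T, (γ j + (T - t) * c j) ∂(ν j)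

/-- The M-CLP* objective. -/
noncomputable def zDual {K : ℕ} (b β lam : Fin K → ℝ) (T : ℝ) (P : ℝ → Fin K → ℝ)
    (ν : Fin K → Measure ℝ) : ℝ :=
  (∑ k, lam k * P 0 k) + ∑ k, ∫ s in Set.Icc (0:ℝ) T, (β k + (T - s) * b k) ∂(ν k)

/-- The primal slack `x(t) = β + t·b − A·U(t)` for `0 ≤ t < T`, and
`x(T) = β + T·b + λ − A·U(T)`. -/
noncomputable def xSlack {K J : ℕ} (A : Matrix (Fin K) (Fin J) ℝ) (b β lam : Fin K → ℝ)
    (T : ℝ) (U : ℝ → Fin J → ℝ) (t : ℝ) (k : Fin K) : ℝ :=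
  β k + t * b k + (if t < T then 0 else lam k) - A.mulVec (U t) k

/-- The dual slack `q(s) = Aᵀ·P(s) − γ − s·c` for `0 ≤ s < T`, and
`q(T) = Aᵀ·P(T) − γ − T·c − μ`. -/
noncomputable def qSlack {K J : ℕ} (A : Matrix (Fin K) (Fin J) ℝ) (c γ μ : Fin J → ℝ)
    (T : ℝ) (P : ℝ → Fin K → ℝ) (s : ℝ) (j : Fin J) : ℝ :=
  A.transpose.mulVec (P s) j - γ j - s * c j - (if s < T then 0 else μ j)

section AuxLemmas

section Aux

variable {T : ℝ} {F G : ℝ → ℝ} {ν μ : Measure ℝ}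

/-- single LS condition -/
def LS1 (T : ℝ) (F : ℝ → ℝ) (ν : Measure ℝ) : Prop :=
  ν (Set.Icc 0 T)ᶜ = 0 ∧ ∀ x ∈ Set.Icc (0:ℝ) T, ν (Set.Icc 0 x) = ENNReal.ofReal (F x)

lemma LS1.finite (hT : 0 ≤ T) (h : LS1 T F ν) : IsFiniteMeasure ν := by
  refine ⟨?_⟩
  have : ν Set.univ ≤ ν (Set.Icc 0 T) + ν (Set.Icc 0 T)ᶜ := by
    rw [← Set.union_compl_self (Set.Icc 0 T)]
    exact measure_union_le _ _
  rw [h.1, add_zero, h.2 T ⟨hT, le_refl T⟩] at this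
  exact lt_of_le_of_lt this ENNReal.ofReal_lt_top

lemma LS1.Iic (h : LS1 T F ν) {x : ℝ} (hx : x ∈ Set.Icc (0:ℝ) T) :
    ν (Set.Iic x) = ENNReal.ofReal (F x) := by
  refine le_antisymm ?_ ?_
  · calc ν (Set.Iic x) ≤ ν (Set.Icc 0 x ∪ (Set.Icc 0 T)ᶜ) := by
          refine measure_mono fun t ht => ?_
          by_cases h0 : t ∈ Set.Icc (0:ℝ) T
          · exact Or.inl ⟨h0.1, ht⟩
          · exact Or.inr h0
      _ ≤ ν (Set.Icc 0 x) + ν (Set.Icc 0 T)ᶜ := measure_union_le _ _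
      _ = ENNReal.ofReal (F x) := by rw [h.1, add_zero, h.2 x hx]
  · rw [← h.2 x hx]; exact measure_mono fun t ht => ht.2

lemma LS1.lintegral_eq (h : LS1 T F ν) (f : ℝ → ENNReal) :
    ∫⁻ t in Set.Icc 0 T, f t ∂ν = ∫⁻ t, f t ∂ν := by
  conv_rhs => rw [← lintegral_add_compl f (measurableSet_Icc (a := (0:ℝ)) (b := T))]
  rw [setLIntegral_measure_zero _ _ h.1, add_zero]

/-- the Fubini swap -/
lemma LS1.swap (hT : 0 ≤ T) (hF : LS1 T F ν) (hG : LS1 T G μ)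
    (hF0 : ∀ x ∈ Set.Icc (0:ℝ) T, 0 ≤ F x) (hG0 : ∀ x ∈ Set.Icc (0:ℝ) T, 0 ≤ G x) :
    ∫ s in Set.Icc (0:ℝ) T, F (T - s) ∂μ = ∫ t in Set.Icc (0:ℝ) T, G (T - t) ∂ν := by
  haveI := hF.finite hT
  haveI := hG.finite hT
  have hSm : MeasurableSet {p : ℝ × ℝ | p.1 + p.2 ≤ T} :=
    (isClosed_le (by fun_prop) continuous_const).measurableSet
  -- core lintegral identity
  have key : ∫⁻ s, ν (Set.Iic (T - s)) ∂μ = ∫⁻ t, μ (Set.Iic (T - t)) ∂ν := by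
    have h1 := MeasureTheory.Measure.prod_apply_symm (μ := ν) (ν := μ) hSm
    have h2 := MeasureTheory.Measure.prod_apply (μ := ν) (ν := μ) hSm
    have e1 : ∀ s : ℝ, ((fun t => (t, s)) ⁻¹' {p : ℝ × ℝ | p.1 + p.2 ≤ T}) = Set.Iic (T - s) := by
      intro s; ext t; simp [Set.mem_Iic]; constructor <;> intro <;> linarith
    have e2 : ∀ t : ℝ, (Prod.mk t ⁻¹' {p : ℝ × ℝ | p.1 + p.2 ≤ T}) = Set.Iic (T - t) := by
      intro t; ext s; simp [Set.mem_Iic]; constructor <;> intro <;> linarith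
    simp only [e1] at h1
    simp only [e2] at h2
    rw [← h1, h2]
  -- convert each side
  have conv : ∀ (ν' μ' : Measure ℝ) (F' : ℝ → ℝ), LS1 T F' ν' → IsFiniteMeasure ν' →
      (∀ x ∈ Set.Icc (0:ℝ) T, 0 ≤ F' x) → IsFiniteMeasure μ' →
      ∫ s in Set.Icc (0:ℝ) T, F' (T - s) ∂μ' = (∫⁻ s, ν' (Set.Iic (T - s)) ∂μ' -
        ∫⁻ s in (Set.Icc (0:ℝ) T)ᶜ, ν' (Set.Iic (T - s)) ∂μ').toReal := by
    intro ν' μ' F' hF' hfin hF0' hfinμ'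
    have gmeas : Measurable (fun s => (ν' (Set.Iic (T - s))).toReal) := by
      have : Antitone (fun s => ν' (Set.Iic (T - s))) := fun a b hab =>
        measure_mono (Set.Iic_subset_Iic.2 (by linarith))
      exact this.measurable.ennreal_toReal
    have heq : Set.EqOn (fun s => F' (T - s)) (fun s => (ν' (Set.Iic (T - s))).toReal)
        (Set.Icc 0 T) := by
      intro s hs
      have hTs : T - s ∈ Set.Icc (0:ℝ) T := ⟨by linarith [hs.2], by linarith [hs.1]⟩
      simp only
      rw [hF'.Iic hTs, ENNReal.toReal_ofReal (hF0' _ hTs)]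
    rw [setIntegral_congr_fun measurableSet_Icc heq]
    rw [integral_eq_lintegral_of_nonneg_ae (Filter.Eventually.of_forall fun s =>
      ENNReal.toReal_nonneg) gmeas.aestronglyMeasurable.restrict]
    congr 1
    have : ∀ s, ENNReal.ofReal ((ν' (Set.Iic (T - s))).toReal) = ν' (Set.Iic (T - s)) :=
      fun s => ENNReal.ofReal_toReal (measure_ne_top ν' _)
    simp only [this]
    have htot := lintegral_add_compl (fun s => ν' (Set.Iic (T - s)))
      (measurableSet_Icc (a := (0:ℝ)) (b := T)) (μ := μ')
    have hbound : ∫⁻ s in (Set.Icc (0:ℝ) T)ᶜ, ν' (Set.Iic (T - s)) ∂μ' ≠ ⊤ := by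
      refine ne_of_lt (lt_of_le_of_lt (?_ : _ ≤ ∫⁻ _ in (Set.Icc (0:ℝ) T)ᶜ, ν' Set.univ ∂μ') ?_)
      · exact lintegral_mono fun s => measure_mono (Set.subset_univ _)
      · rw [setLIntegral_const]
        exact ENNReal.mul_lt_top (measure_lt_top _ _) (measure_lt_top _ _)
    exact ENNReal.eq_sub_of_add_eq hbound htot
  have cnull1 : ∫⁻ s in (Set.Icc (0:ℝ) T)ᶜ, ν (Set.Iic (T - s)) ∂μ = 0 :=
    setLIntegral_measure_zero _ _ hG.1
  have cnull2 : ∫⁻ t in (Set.Icc (0:ℝ) T)ᶜ, μ (Set.Iic (T - t)) ∂ν = 0 :=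
    setLIntegral_measure_zero _ _ hF.1
  rw [conv ν μ F hF (hF.finite hT) hF0 (hG.finite hT),
      conv μ ν G hG (hG.finite hT) hG0 (hF.finite hT), cnull1, cnull2, key]

end Aux

section Aux2

variable {T : ℝ} {F : ℝ → ℝ} {ν μ : Measure ℝ}

lemma LS1.integrableOn_comp (hF : LS1 T F ν) [IsFiniteMeasure μ]
    (hF0 : ∀ x ∈ Set.Icc (0:ℝ) T, 0 ≤ F x) (hT : 0 ≤ T) :
    MeasureTheory.IntegrableOn (fun s => F (T - s)) (Set.Icc 0 T) μ := by
  haveI := hF.finite hT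
  have gmeas : Measurable (fun s => (ν (Set.Iic (T - s))).toReal) := by
    have : Antitone (fun s => ν (Set.Iic (T - s))) := fun a b hab =>
      measure_mono (Set.Iic_subset_Iic.2 (by linarith))
    exact this.measurable.ennreal_toReal
  have hint : MeasureTheory.IntegrableOn (fun s => (ν (Set.Iic (T - s))).toReal)
      (Set.Icc 0 T) μ := by
    refine Measure.integrableOn_of_bounded (measure_ne_top μ _)
      gmeas.aestronglyMeasurable (M := (ν Set.univ).toReal)
      (Filter.Eventually.of_forall fun s => ?_)
    rw [Real.norm_eq_abs, abs_of_nonneg ENNReal.toReal_nonneg]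
    exact ENNReal.toReal_mono (measure_ne_top _ _) (measure_mono (Set.subset_univ _))
  refine hint.congr_fun (fun s hs => ?_) measurableSet_Icc
  have hTs : T - s ∈ Set.Icc (0:ℝ) T := ⟨by linarith [hs.2], by linarith [hs.1]⟩
  show (ν (Set.Iic (T - s))).toReal = F (T - s)
  rw [hF.Iic hTs, ENNReal.toReal_ofReal (hF0 _ hTs)]

lemma jump_meas (T a : ℝ) : Measurable (fun s : ℝ => if T - s < T then 0 else a) := by
  refine Measurable.ite ?_ measurable_const measurable_const
  exact measurableSet_lt (by fun_prop) measurable_const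

lemma jump_integrableOn [IsFiniteMeasure ν] (T a : ℝ) :
    MeasureTheory.IntegrableOn (fun s : ℝ => if T - s < T then 0 else a) (Set.Icc 0 T) ν := by
  refine Measure.integrableOn_of_bounded (measure_ne_top ν _)
    (jump_meas T a).aestronglyMeasurable (M := |a|)
    (Filter.Eventually.of_forall fun s => ?_)
  by_cases h : T - s < T <;> simp [h, abs_nonneg]

lemma LS1.jump_integral (hT : 0 ≤ T) (hF : LS1 T F ν) (hF0 : 0 ≤ F 0) (a : ℝ) :
    ∫ s in Set.Icc (0:ℝ) T, (if T - s < T then 0 else a) ∂ν = a * F 0 := by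
  have hind : ∀ s : ℝ, (if T - s < T then 0 else a) = Set.indicator (Set.Iic 0)
      (fun _ => a) s := by
    intro s
    by_cases h : s ≤ 0
    · rw [Set.indicator_of_mem (Set.mem_Iic.mpr h)]
      rw [if_neg (by linarith)]
    · rw [Set.indicator_of_notMem (by simpa [Set.mem_Iic] using h)]
      rw [if_pos (by push_neg at h; linarith)]
  simp only [hind]
  rw [integral_indicator measurableSet_Iic]
  rw [MeasureTheory.Measure.restrict_restrict measurableSet_Iic]
  have hset : Set.Iic (0:ℝ) ∩ Set.Icc 0 T = {0} := by
    ext t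
    simp only [Set.mem_inter_iff, Set.mem_Iic, Set.mem_Icc, Set.mem_singleton_iff]
    constructor
    · rintro ⟨h1, h2, _⟩; linarith
    · rintro rfl; exact ⟨le_refl _, le_refl _, hT⟩
  rw [hset, setIntegral_const]
  have : ν {0} = ENNReal.ofReal (F 0) := by
    rw [← Set.Icc_self (0:ℝ)]
    exact hF.2 0 ⟨le_refl _, hT⟩
  rw [measureReal_def, this, ENNReal.toReal_ofReal hF0, smul_eq_mul, mul_comm]

end Aux2

end AuxLemmas

/-- The duality gap identity: for every feasible `U` of M-CLP with slack `x` and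
feasible `P` of M-CLP* with slack `q`,
`z*(P) − z(U) = Σ_k ∫_{[0,T]} x_k(T−s) dP_k(s) + Σ_j ∫_{[0,T]} q_j(T−t) dU_j(t)`. -/
theorem duality_gap_identity {K J : ℕ}
    (A : Matrix (Fin K) (Fin J) ℝ) (b β lam : Fin K → ℝ) (c γ μ : Fin J → ℝ) (T : ℝ)
    (hT : 0 < T)
    (U : ℝ → Fin J → ℝ) (P : ℝ → Fin K → ℝ)
    (νU : Fin J → Measure ℝ) (νP : Fin K → Measure ℝ)
    (hU : PrimalFeasible A b β lam T U) (hP : DualFeasible A c γ μ T P)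
    (hνU : LSFamily T U νU) (hνP : LSFamily T P νP) :
    zDual b β lam T P νP - zPrimal c γ μ T U νU =
      (∑ k, ∫ s in Set.Icc (0:ℝ) T, xSlack A b β lam T U (T - s) k ∂(νP k)) +
      (∑ j, ∫ t in Set.Icc (0:ℝ) T, qSlack A c γ μ T P (T - t) j ∂(νU j)) := by
  have hT0 : (0:ℝ) ≤ T := le_of_lt hT
  have hLSP : ∀ k, LS1 T (fun s => P s k) (νP k) := fun k => ⟨(hνP k).1, (hνP k).2⟩
  have hLSU : ∀ j, LS1 T (fun t => U t j) (νU j) := fun j => ⟨(hνU j).1, (hνU j).2⟩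
  have hP0 : ∀ k, ∀ x ∈ Set.Icc (0:ℝ) T, 0 ≤ P x k := fun k x hx =>
    le_trans (hP.2.2.1 k) (hP.1 k ⟨le_refl _, hT0⟩ hx hx.1)
  have hU0 : ∀ j, ∀ x ∈ Set.Icc (0:ℝ) T, 0 ≤ U x j := fun j x hx =>
    le_trans (hU.2.2.1 j) (hU.1 j ⟨le_refl _, hT0⟩ hx hx.1)
  have hswap : ∀ (k : Fin K) (j : Fin J), ∫ s in Set.Icc (0:ℝ) T, U (T - s) j ∂(νP k)
      = ∫ t in Set.Icc (0:ℝ) T, P (T - t) k ∂(νU j) :=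
    fun k j => LS1.swap hT0 (hLSU j) (hLSP k) (hU0 j) (hP0 k)
  have hxeq : ∀ k, ∫ s in Set.Icc (0:ℝ) T, xSlack A b β lam T U (T - s) k ∂(νP k)
      = (∫ s in Set.Icc (0:ℝ) T, (β k + (T - s) * b k) ∂(νP k)) + lam k * P 0 k
        - ∑ j, A k j * ∫ s in Set.Icc (0:ℝ) T, U (T - s) j ∂(νP k) := by
    intro k
    haveI := (hLSP k).finite hT0
    have if1 : MeasureTheory.IntegrableOn (fun s : ℝ => β k + (T - s) * b k)
        (Set.Icc 0 T) (νP k) :=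
      (by fun_prop : Continuous fun s : ℝ => β k + (T - s) * b k).integrableOn_Icc
    have if2 := jump_integrableOn (ν := νP k) T (lam k)
    have if3 : ∀ j, MeasureTheory.IntegrableOn (fun s : ℝ => U (T - s) j)
        (Set.Icc 0 T) (νP k) :=
      fun j => (hLSU j).integrableOn_comp (hU0 j) hT0
    have if3' : MeasureTheory.IntegrableOn (fun s : ℝ => A.mulVec (U (T - s)) k)
        (Set.Icc 0 T) (νP k) := by
      have he : (fun s : ℝ => A.mulVec (U (T - s)) k)
          = fun s => ∑ j, A k j * U (T - s) j := by
        funext s; simp [Matrix.mulVec, dotProduct]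
      rw [he]
      exact MeasureTheory.integrable_finset_sum _ (fun j _ => (if3 j).const_mul (A k j))
    have hmul : ∫ s in Set.Icc (0:ℝ) T, A.mulVec (U (T - s)) k ∂(νP k)
        = ∑ j, A k j * ∫ s in Set.Icc (0:ℝ) T, U (T - s) j ∂(νP k) := by
      calc ∫ s in Set.Icc (0:ℝ) T, A.mulVec (U (T - s)) k ∂(νP k)
          = ∫ s in Set.Icc (0:ℝ) T, ∑ j, A k j * U (T - s) j ∂(νP k) := by
            refine integral_congr_ae (Filter.Eventually.of_forall fun s => ?_)
            simp [Matrix.mulVec, dotProduct]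
        _ = ∑ j, ∫ s in Set.Icc (0:ℝ) T, A k j * U (T - s) j ∂(νP k) :=
            MeasureTheory.integral_finset_sum _ (fun j _ => (if3 j).const_mul (A k j))
        _ = ∑ j, A k j * ∫ s in Set.Icc (0:ℝ) T, U (T - s) j ∂(νP k) := by
            simp [MeasureTheory.integral_const_mul]
    have if12 : MeasureTheory.IntegrableOn
        (fun s : ℝ => (β k + (T - s) * b k) + (if T - s < T then 0 else lam k))
        (Set.Icc 0 T) (νP k) := if1.add if2
    have hxs : ∀ s : ℝ, xSlack A b β lam T U (T - s) k
        = ((β k + (T - s) * b k) + (if T - s < T then 0 else lam k))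
          - A.mulVec (U (T - s)) k := fun s => rfl
    simp only [hxs]
    rw [integral_sub if12 if3', integral_add if1 if2, hmul,
      (hLSP k).jump_integral hT0 (hP0 k 0 ⟨le_refl _, hT0⟩) (lam k)]
  have hqeq : ∀ j, ∫ t in Set.Icc (0:ℝ) T, qSlack A c γ μ T P (T - t) j ∂(νU j)
      = (∑ k, A k j * ∫ t in Set.Icc (0:ℝ) T, P (T - t) k ∂(νU j))
        - (∫ t in Set.Icc (0:ℝ) T, (γ j + (T - t) * c j) ∂(νU j)) - μ j * U 0 j := by
    intro j
    haveI := (hLSU j).finite hT0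
    have if1 : MeasureTheory.IntegrableOn (fun t : ℝ => γ j + (T - t) * c j)
        (Set.Icc 0 T) (νU j) :=
      (by fun_prop : Continuous fun t : ℝ => γ j + (T - t) * c j).integrableOn_Icc
    have if2 := jump_integrableOn (ν := νU j) T (μ j)
    have if3 : ∀ k, MeasureTheory.IntegrableOn (fun t : ℝ => P (T - t) k)
        (Set.Icc 0 T) (νU j) :=
      fun k => (hLSP k).integrableOn_comp (hP0 k) hT0
    have if3' : MeasureTheory.IntegrableOn (fun t : ℝ => A.transpose.mulVec (P (T - t)) j)
        (Set.Icc 0 T) (νU j) := by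
      have he : (fun t : ℝ => A.transpose.mulVec (P (T - t)) j)
          = fun t => ∑ k, A k j * P (T - t) k := by
        funext t; simp [Matrix.mulVec, dotProduct, Matrix.transpose_apply]
      rw [he]
      exact MeasureTheory.integrable_finset_sum _ (fun k _ => (if3 k).const_mul (A k j))
    have hmul : ∫ t in Set.Icc (0:ℝ) T, A.transpose.mulVec (P (T - t)) j ∂(νU j)
        = ∑ k, A k j * ∫ t in Set.Icc (0:ℝ) T, P (T - t) k ∂(νU j) := by
      calc ∫ t in Set.Icc (0:ℝ) T, A.transpose.mulVec (P (T - t)) j ∂(νU j)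
          = ∫ t in Set.Icc (0:ℝ) T, ∑ k, A k j * P (T - t) k ∂(νU j) := by
            refine integral_congr_ae (Filter.Eventually.of_forall fun t => ?_)
            simp [Matrix.mulVec, dotProduct, Matrix.transpose_apply]
        _ = ∑ k, ∫ t in Set.Icc (0:ℝ) T, A k j * P (T - t) k ∂(νU j) :=
            MeasureTheory.integral_finset_sum _ (fun k _ => (if3 k).const_mul (A k j))
        _ = ∑ k, A k j * ∫ t in Set.Icc (0:ℝ) T, P (T - t) k ∂(νU j) := by
            simp [MeasureTheory.integral_const_mul]
    have if12 : MeasureTheory.IntegrableOn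
        (fun t : ℝ => (γ j + (T - t) * c j) + (if T - t < T then 0 else μ j))
        (Set.Icc 0 T) (νU j) := if1.add if2
    have hqs : ∀ t : ℝ, qSlack A c γ μ T P (T - t) j
        = A.transpose.mulVec (P (T - t)) j
          - ((γ j + (T - t) * c j) + (if T - t < T then 0 else μ j)) := by
      intro t; simp only [qSlack]; ring
    simp only [hqs]
    rw [integral_sub if3' if12, integral_add if1 if2, hmul,
      (hLSU j).jump_integral hT0 (hU0 j 0 ⟨le_refl _, hT0⟩) (μ j)]
    ring
  simp only [zDual, zPrimal, hxeq, hqeq, hswap]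
  simp only [Finset.sum_sub_distrib, Finset.sum_add_distrib]
  rw [Finset.sum_comm (f := fun k j => A k j * ∫ t in Set.Icc (0:ℝ) T, P (T - t) k ∂(νU j))]
  ring
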